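/- Let ℱ = { x ↦ γ(x)𝟏 : γ : ℝ^n → ℝ Lipschitz }, where 𝟏 = (1,…,1) ∈ ℝ^n. Then every mapping φ in the attainable set A_ℱ satisfies [φ(x)]_i − [φ(x)]_j = x_i − x_j for all x ∈ ℝ^n and all indices i, j. Consequently, with the terminal family G = {g} where g(x) = max_i x_i − min_i x_i, every F ∈ H_ode(ℱ, {g}) equals g, so H_ode(ℱ, {g}) cannot approximate all S_n invariant continuous functions. -/

import Mathlib

open MeasureTheory

namespace SymDyn

/-- Action of a permutation on ℝⁿ by permuting coordinates: `(𝔤(x))_i = x_{𝔤(i)}`. -/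
def permAct {n : ℕ} (g : Equiv.Perm (Fin n)) (x : Fin n → ℝ) : Fin n → ℝ :=
  fun i => x (g i)

/-- `F` is 𝒢 invariant. -/
def IsInvariant {n : ℕ} {α : Type*} (G : Subgroup (Equiv.Perm (Fin n)))
    (F : (Fin n → ℝ) → α) : Prop :=
  ∀ g ∈ G, ∀ x, F (permAct g x) = F x

/-- `f` is 𝒢 equivariant. -/
def IsEquivariant {n : ℕ} (G : Subgroup (Equiv.Perm (Fin n)))
    (f : (Fin n → ℝ) → (Fin n → ℝ)) : Prop :=
  ∀ g ∈ G, ∀ x, f (permAct g x) = permAct g (f x)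

/-- `G` is a transitive permutation group on indices. -/
def IsTransitive {n : ℕ} (G : Subgroup (Equiv.Perm (Fin n))) : Prop :=
  ∀ i j : Fin n, ∃ g ∈ G, g i = j

/-- Lipschitz with some (finite) constant. -/
def IsLip {E F : Type*} [PseudoEMetricSpace E] [PseudoEMetricSpace F] (f : E → F) : Prop :=
  ∃ K : NNReal, LipschitzWith K f

/-- `φ` is the time-`T` flow map of the ODE `ż = f(z)`. -/
def IsFlowMap {n : ℕ} (f : (Fin n → ℝ) → (Fin n → ℝ)) (T : ℝ)
    (φ : (Fin n → ℝ) → (Fin n → ℝ)) : Prop :=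
  ∀ x : Fin n → ℝ, ∃ z : ℝ → (Fin n → ℝ),
    z 0 = x ∧ (∀ t : ℝ, HasDerivAt z (f (z t)) t) ∧ φ x = z T

/-- Attainable set of a control family: all finite compositions
`φ(f₁,τ₁) ∘ ⋯ ∘ φ(f_k,τ_k)` of flow maps of members of `𝓕`. -/
def AttainSet {n : ℕ} (𝓕 : Set ((Fin n → ℝ) → (Fin n → ℝ))) :
    Set ((Fin n → ℝ) → (Fin n → ℝ)) :=
  { φ | ∃ k : ℕ, 1 ≤ k ∧
      ∃ (fs : Fin k → (Fin n → ℝ) → (Fin n → ℝ)) (τ : Fin k → ℝ)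
        (ψ : Fin k → (Fin n → ℝ) → (Fin n → ℝ)),
        (∀ i, fs i ∈ 𝓕 ∧ 0 ≤ τ i ∧ IsFlowMap (fs i) (τ i) (ψ i)) ∧
        φ = (List.ofFn ψ).foldr (· ∘ ·) id }

/-- Dynamical hypothesis space `H_ode(𝓕,𝓖) = {g ∘ φ : g ∈ 𝓖, φ ∈ A_𝓕}`. -/
def Hode {n : ℕ} {β : Type*} (𝓕 : Set ((Fin n → ℝ) → (Fin n → ℝ)))
    (𝓖 : Set ((Fin n → ℝ) → β)) : Set ((Fin n → ℝ) → β) :=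
  { F | ∃ g ∈ 𝓖, ∃ φ ∈ AttainSet 𝓕, F = g ∘ φ }

/-- Closure of a family of functions in the topology of compact convergence. -/
def ccClosure {α F : Type*} [TopologicalSpace α] [NormedAddCommGroup F]
    (S : Set (α → F)) : Set (α → F) :=
  { h | ∀ K : Set α, IsCompact K → ∀ ε : ℝ, 0 < ε → ∃ f ∈ S, ∀ x ∈ K, ‖f x - h x‖ ≤ ε }

/-- `CH̄(S)`: closure of the convex hull in the topology of compact convergence. -/
def CHbar {α F : Type*} [TopologicalSpace α] [NormedAddCommGroup F] [NormedSpace ℝ F]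
    (S : Set (α → F)) : Set (α → F) :=
  ccClosure (convexHull ℝ S)

/-- The `coor` operator: scalar functions `f₁` such that for some `𝔱_i ∈ G` with
`𝔱_i(1) = i`, the assembled mapping `[f₁∘𝔱_1, …, f₁∘𝔱_n]` belongs to `𝓕`. -/
def coorFam {n : ℕ} [NeZero n] (G : Subgroup (Equiv.Perm (Fin n)))
    (𝓕 : Set ((Fin n → ℝ) → (Fin n → ℝ))) : Set ((Fin n → ℝ) → ℝ) :=
  { f1 | ∃ t : Fin n → Equiv.Perm (Fin n),
      (∀ i, t i ∈ G ∧ t i 0 = i) ∧ (fun x i => f1 (permAct (t i) x)) ∈ 𝓕 }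

/-- One-dimensional well function: Lipschitz with zero set a nondegenerate
closed bounded interval. -/
def IsWell1D (h : ℝ → ℝ) : Prop :=
  IsLip h ∧ ∃ a b : ℝ, a < b ∧ {x : ℝ | h x = 0} = Set.Icc a b

/-- Symmetric invariant well function. -/
def IsSymWell {n : ℕ} (τ : (Fin n → ℝ) → ℝ) : Prop :=
  IsLip τ ∧
  (∀ g : Equiv.Perm (Fin n), ∀ x, τ (permAct g x) = τ x) ∧
  (∃ I : Set ℝ, I.Nonempty ∧ I.OrdConnected ∧ Bornology.IsBounded I ∧
      ∀ x : Fin n → ℝ, (∀ i, x i ∈ I) → τ x = 0) ∧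
  (∀ i : Fin n, ∀ b : ℝ, 0 < b → ∃ a : ℝ, 0 < a ∧
      ∀ x : Fin n → ℝ, a < |x i| → (∀ j, j ≠ i → |x j| < b) → τ x ≠ 0)

/-- A point is in general position iff its coordinates are pairwise distinct. -/
def GeneralPos {n : ℕ} (x : Fin n → ℝ) : Prop := Function.Injective x

/-- The similarity `s̄(x,y)` is nonzero: at least one of the two points is in
general position, and some coordinate value is shared. -/
def SimilarPos {n : ℕ} (x y : Fin n → ℝ) : Prop :=
  (GeneralPos x ∨ GeneralPos y) ∧ ∃ i j : Fin n, x i = y j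

/-- The perturbation property of a control family. -/
def PerturbProp {n : ℕ} (𝓕 : Set ((Fin n → ℝ) → (Fin n → ℝ))) : Prop :=
  ∀ x y : Fin n → ℝ, SimilarPos x y →
    ∃ f ∈ 𝓕, ∃ u : ℝ → ℝ, Continuous u ∧ StrictMono u ∧
      ∃ i : Fin n, x i = y i ∧ f (fun j => u (x j)) i ≠ f (fun j => u (y j)) i

/-- Cross section `Q_𝔤 = {x : x_{𝔤⁻¹(1)} > x_{𝔤⁻¹(2)} > ⋯ > x_{𝔤⁻¹(n)}}`. -/
def crossSec {n : ℕ} (g : Equiv.Perm (Fin n)) : Set (Fin n → ℝ) :=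
  { x | ∀ i j : Fin n, i < j → x (g⁻¹ j) < x (g⁻¹ i) }

/-- `A` is a (right) transversal of the subgroup `G`. -/
def IsTransversal {n : ℕ} (G : Subgroup (Equiv.Perm (Fin n)))
    (A : Set (Equiv.Perm (Fin n))) : Prop :=
  (∀ a ∈ A, ∀ b ∈ A, a ≠ b → a * b⁻¹ ∉ G) ∧
  (∀ b : Equiv.Perm (Fin n), ∃ a ∈ A, a * b⁻¹ ∈ G)

/-- Cross section of a transversal: `Q_A = ⋃_{𝔞 ∈ A} Q_𝔞`. -/
def crossSecA {n : ℕ} (A : Set (Equiv.Perm (Fin n))) : Set (Fin n → ℝ) :=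
  ⋃ a ∈ A, crossSec a

/-- `𝔞` and `𝔟` are directly `𝓕` connected. -/
def DirectlyConn {n : ℕ} (𝓕 : Set ((Fin n → ℝ) → (Fin n → ℝ)))
    (a b : Equiv.Perm (Fin n)) : Prop :=
  ∃ i j : Fin n, i ≠ j ∧ a = Equiv.swap i j * b ∧
    ∃ z ∈ frontier (crossSec a) ∩ frontier (crossSec b), ∃ f ∈ 𝓕, f z i ≠ f z j

/-- `𝔞` and `𝔟` are `𝓕` connected (joined by a chain of directly connected elements). -/
def ConnIn {n : ℕ} (𝓕 : Set ((Fin n → ℝ) → (Fin n → ℝ)))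
    (a b : Equiv.Perm (Fin n)) : Prop :=
  ∃ (s : ℕ) (g : Fin (s + 1) → Equiv.Perm (Fin n)), g 0 = a ∧ g (Fin.last s) = b ∧
    ∀ i : Fin s, DirectlyConn 𝓕 (g i.castSucc) (g i.succ)

/-- `𝓕` resolves `G`: it has the perturbation property and is `G` transversally
transitive. -/
def Resolves {n : ℕ} (G : Subgroup (Equiv.Perm (Fin n)))
    (𝓕 : Set ((Fin n → ℝ) → (Fin n → ℝ))) : Prop :=
  PerturbProp 𝓕 ∧ ∃ A : Set (Equiv.Perm (Fin n)), IsTransversal G A ∧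
    ∀ a ∈ A, ∀ b ∈ A, a ≠ b → ConnIn 𝓕 a b

/-- A finite point set is `G` distinct: the `G` orbits of its points are distinct. -/
def GDistinct {n M : ℕ} (G : Subgroup (Equiv.Perm (Fin n)))
    (x : Fin M → Fin n → ℝ) : Prop :=
  ∀ g ∈ G, ∀ i j : Fin M, permAct g (x i) = x j → g = 1 ∧ i = j

/-- `x ≺ y`: every coordinate of `x` is below every coordinate of `y`. -/
def precLT {n : ℕ} (x y : Fin n → ℝ) : Prop := ∀ i j : Fin n, x i < y j

/-- A finite point set is partially ordered. -/
def PartiallyOrderedPts {n m : ℕ} (x : Fin m → Fin n → ℝ) : Prop :=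
  ∀ i j : Fin m,
    ((j < i ∧ GeneralPos (x i) ∧ GeneralPos (x j)) ∨
      (¬ GeneralPos (x i) ∧ GeneralPos (x j))) → precLT (x i) (x j)

/-- A finite point set is well perturbed: whenever two (indexed) coordinate values
coincide nontrivially, both points fail to be in general position. -/
def WellPerturbed {n m : ℕ} (y : Fin m → Fin n → ℝ) : Prop :=
  ∀ (j l : Fin m) (i k : Fin n), (i, j) ≠ (k, l) → y j i = y l k →
    ¬ GeneralPos (y j) ∧ ¬ GeneralPos (y l)

/-- Composition of a finite family of maps, applying the index-`0` map first. -/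
def foldComp {E : Type*} {s : ℕ} (Φ : Fin s → E → E) : E → E :=
  (List.ofFn Φ).foldl (fun acc f => f ∘ acc) id

/-- `t` is a partition `0 = t₀ < t₁ < ⋯ < t_s = T` of `[0,T]`. -/
def IsPartition {s : ℕ} (T : ℝ) (t : Fin (s + 1) → ℝ) : Prop :=
  StrictMono t ∧ t 0 = 0 ∧ t (Fin.last s) = T

/-- Discrete flow of a one-step numerical integrator `Φ` over a partition. -/
def discFlow {n : ℕ} (Φ : ℝ → (Fin n → ℝ) → (Fin n → ℝ)) {s : ℕ}
    (t : Fin (s + 1) → ℝ) : (Fin n → ℝ) → (Fin n → ℝ) :=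
  foldComp (fun i : Fin s => Φ (t i.succ - t i.castSucc))

/-- Convergence of a numerical scheme `Φ` for the vector field `f`. -/
def ConvergentScheme {n : ℕ} (f : (Fin n → ℝ) → (Fin n → ℝ))
    (Φ : ℝ → (Fin n → ℝ) → (Fin n → ℝ)) : Prop :=
  (∀ K : Set (Fin n → ℝ), IsCompact K → ∀ ε : ℝ, 0 < ε → ∃ δ > (0 : ℝ),
      ∀ τ : ℝ, 0 < τ → τ < δ → ∀ x ∈ K, ‖Φ τ x - x‖ ≤ ε) ∧
  (∀ T : ℝ, ∀ φT : (Fin n → ℝ) → (Fin n → ℝ), IsFlowMap f T φT →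
      ∀ K : Set (Fin n → ℝ), IsCompact K → ∀ ε : ℝ, 0 < ε → ∃ δ > (0 : ℝ),
      ∀ (s : ℕ) (t : Fin (s + 1) → ℝ), IsPartition T t →
        (∀ i : Fin s, t i.succ - t i.castSucc < δ) →
        ∀ x ∈ K, ‖discFlow Φ t x - φT x‖ ≤ ε) ∧
  (∃ g : (Fin n → ℝ) → ℝ → ℝ, Continuous (fun q : (Fin n → ℝ) × ℝ => g q.1 q.2) ∧
      ∀ T : ℝ, 0 ≤ T → ∀ (s : ℕ) (t : Fin (s + 1) → ℝ), IsPartition T t →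
        ∀ x, ‖discFlow Φ t x‖ ≤ g x T)

/-- `L^p` error of `f` on the region `K` (with respect to Lebesgue measure). -/
noncomputable def lpErr {n : ℕ} {β : Type*} [NormedAddCommGroup β]
    (p : ℝ) (K : Set (Fin n → ℝ)) (f : (Fin n → ℝ) → β) : ENNReal :=
  eLpNorm f (ENNReal.ofReal p) (volume.restrict K)

/-- Universal approximation property in `L^p` on compact sets. -/
def HasUAP {n : ℕ} {β : Type*} [NormedAddCommGroup β]
    (p : ℝ) (H : Set ((Fin n → ℝ) → β)) : Prop :=
  ∀ F : (Fin n → ℝ) → β, Continuous F → ∀ K : Set (Fin n → ℝ), IsCompact K →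
    ∀ ε : ℝ, 0 < ε → ∃ Fh ∈ H, lpErr p K (fun x => F x - Fh x) ≤ ENNReal.ofReal ε

/-- `G` universal approximation property in `L^p` on compact sets. -/
def HasGUAP {n : ℕ} {β : Type*} [NormedAddCommGroup β]
    (G : Subgroup (Equiv.Perm (Fin n))) (p : ℝ) (H : Set ((Fin n → ℝ) → β)) : Prop :=
  ∀ F : (Fin n → ℝ) → β, Continuous F → IsInvariant G F →
    ∀ K : Set (Fin n → ℝ), IsCompact K →
    ∀ ε : ℝ, 0 < ε → ∃ Fh ∈ H, lpErr p K (fun x => F x - Fh x) ≤ ENNReal.ofReal ε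

/-- Discretized attainable set obtained from a numerical scheme `sch`. -/
def discAttain {n : ℕ} (𝓕 : Set ((Fin n → ℝ) → (Fin n → ℝ)))
    (sch : ((Fin n → ℝ) → (Fin n → ℝ)) → ℝ → (Fin n → ℝ) → (Fin n → ℝ)) :
    Set ((Fin n → ℝ) → (Fin n → ℝ)) :=
  { φ | ∃ l : ℕ, 1 ≤ l ∧ ∃ (fs : Fin l → (Fin n → ℝ) → (Fin n → ℝ)) (t : Fin (l + 1) → ℝ),
      t 0 = 0 ∧ StrictMono t ∧ (∀ i, fs i ∈ 𝓕) ∧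
      φ = foldComp (fun i : Fin l => sch (fs i) (t i.succ - t i.castSucc)) }


/-- The control family `{x ↦ γ(x)𝟏 : γ Lipschitz}`. -/
def gammaFam (n : ℕ) : Set ((Fin n → ℝ) → (Fin n → ℝ)) :=
  { f | ∃ γ : (Fin n → ℝ) → ℝ, IsLip γ ∧ f = fun x _ => γ x }

/-- The terminal function `g(x) = max_i x_i − min_i x_i`. -/
noncomputable def maxMinusMin (n : ℕ) [NeZero n] (x : Fin n → ℝ) : ℝ :=
  haveI : Nonempty (Fin n) := ⟨⟨0, Nat.pos_of_ne_zero (NeZero.ne n)⟩⟩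
  Finset.univ.sup' Finset.univ_nonempty x - Finset.univ.inf' Finset.univ_nonempty x

lemma inf'_add_aux {ι : Type*} (s : Finset ι) (hs : s.Nonempty) (f : ι → ℝ) (a : ℝ) :
    s.inf' hs f + a = s.inf' hs fun i => f i + a :=
  map_finset_inf' (OrderIso.addRight a) hs f

/-- A single flow map of a vector field in `gammaFam` preserves coordinate differences. -/
lemma flow_preserves_diff {n : ℕ} {f : (Fin n → ℝ) → (Fin n → ℝ)} (hf : f ∈ gammaFam n)
    {T : ℝ} {ψ : (Fin n → ℝ) → (Fin n → ℝ)} (hψ : IsFlowMap f T ψ)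
    (x : Fin n → ℝ) (i j : Fin n) : ψ x i - ψ x j = x i - x j := by
  obtain ⟨γ, -, rfl⟩ := hf
  obtain ⟨z, hz0, hz', hzT⟩ := hψ x
  have hdi : ∀ (k : Fin n) (t : ℝ), HasDerivAt (fun t => z t k) (γ (z t)) t := by
    intro k t
    exact (hasDerivAt_pi.1 (hz' t)) k
  have hw : ∀ t : ℝ, HasDerivAt (fun t => z t i - z t j) 0 t := by
    intro t
    have h := (hdi i t).sub (hdi j t); rw [sub_self] at h; exact h
  have hc := is_const_of_deriv_eq_zero (f := fun t => z t i - z t j)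
    (fun t => (hw t).differentiableAt) (fun t => (hw t).deriv) T 0
  rw [hzT]
  simpa [hz0] using hc

lemma foldr_preserves_diff {n : ℕ} (l : List ((Fin n → ℝ) → (Fin n → ℝ)))
    (h : ∀ f ∈ l, ∀ x : Fin n → ℝ, ∀ i j : Fin n, f x i - f x j = x i - x j) :
    ∀ x : Fin n → ℝ, ∀ i j : Fin n,
      (l.foldr (· ∘ ·) id) x i - (l.foldr (· ∘ ·) id) x j = x i - x j := by
  induction l with
  | nil => intro x i j; simp
  | cons f l ih =>
    intro x i j
    have h1 := h f List.mem_cons_self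
    have h2 := ih (fun g hg => h g (List.mem_cons_of_mem f hg)) x i j
    simp only [List.foldr_cons, Function.comp_apply]
    rw [h1 _ i j, h2]

lemma attain_preserves_diff {n : ℕ} {φ : (Fin n → ℝ) → (Fin n → ℝ)}
    (hφ : φ ∈ AttainSet (gammaFam n)) (x : Fin n → ℝ) (i j : Fin n) :
    φ x i - φ x j = x i - x j := by
  obtain ⟨k, -, fs, τ, ψ, hall, rfl⟩ := hφ
  refine foldr_preserves_diff _ ?_ x i j
  intro f hfmem
  obtain ⟨m, rfl⟩ := List.mem_ofFn.1 hfmem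
  exact fun y a b => flow_preserves_diff (hall m).1 (hall m).2.2 y a b

/-- flows of the family `{γ(x)𝟏}` preserve all coordinate differences;
with the terminal function `max − min`, every element of the hypothesis space equals
`g`, and the hypothesis space fails the `Sₙ` universal approximation property. -/
theorem gamma_family_counterexample
    (n : ℕ) [NeZero n] :
    (∀ φ ∈ AttainSet (gammaFam n), ∀ x : Fin n → ℝ, ∀ i j : Fin n,
      φ x i - φ x j = x i - x j) ∧
    (∀ F ∈ Hode (gammaFam n) {maxMinusMin n}, F = maxMinusMin n) ∧
    (∀ p : ℝ, 1 ≤ p →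
      ¬ HasGUAP (⊤ : Subgroup (Equiv.Perm (Fin n))) p
        (Hode (gammaFam n) {maxMinusMin n})) := by
  have hdiff : ∀ φ ∈ AttainSet (gammaFam n), ∀ x : Fin n → ℝ, ∀ i j : Fin n,
      φ x i - φ x j = x i - x j := fun φ hφ => attain_preserves_diff hφ
  haveI : Nonempty (Fin n) := ⟨⟨0, Nat.pos_of_ne_zero (NeZero.ne n)⟩⟩
  have hHode : ∀ F ∈ Hode (gammaFam n) {maxMinusMin n}, F = maxMinusMin n := by
    intro F hF
    obtain ⟨g, hg, φ, hφ, rfl⟩ := hF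
    rw [Set.mem_singleton_iff] at hg
    subst hg
    funext x
    set e : Fin n := Classical.arbitrary (Fin n) with he
    have hrep : φ x = fun i => x i + (φ x e - x e) := by
      funext i
      have := hdiff φ hφ x i e
      linarith
    show maxMinusMin n (φ x) = maxMinusMin n x
    unfold maxMinusMin
    rw [hrep, ← Finset.sup'_add, ← inf'_add_aux]
    ring
  refine ⟨hdiff, hHode, ?_⟩
  intro p hp huap
  have hpne : (ENNReal.ofReal p) ≠ 0 := by
    simp [ENNReal.ofReal_eq_zero]; linarith
  set K : Set (Fin n → ℝ) := Set.Icc 0 1 with hK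
  have hvol : volume K = 1 := by
    rw [hK, Real.volume_Icc_pi]
    simp
  obtain ⟨Fh, hFhmem, herr⟩ := huap (fun _ => (2 : ℝ)) continuous_const
    (fun g _ x => rfl) K isCompact_Icc (1/2) (by norm_num)
  have hFh : Fh = maxMinusMin n := hHode Fh hFhmem
  subst hFh
  -- pointwise lower bound on K
  have hptwise : ∀ x ∈ K, (1 : ℝ) ≤ ‖(2 : ℝ) - maxMinusMin n x‖ := by
    intro x hx
    obtain ⟨hx0, hx1⟩ := hx
    have hsup : Finset.univ.sup' Finset.univ_nonempty x ≤ 1 :=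
      Finset.sup'_le _ _ (fun i _ => hx1 i)
    have hinf : (0 : ℝ) ≤ Finset.univ.inf' Finset.univ_nonempty x :=
      Finset.le_inf' _ _ (fun i _ => hx0 i)
    have hm : maxMinusMin n x ≤ 1 := by
      unfold maxMinusMin; linarith
    calc (1 : ℝ) ≤ 2 - maxMinusMin n x := by linarith
      _ ≤ |2 - maxMinusMin n x| := le_abs_self _
      _ = ‖(2 : ℝ) - maxMinusMin n x‖ := (Real.norm_eq_abs _).symm
  have hμ : (volume.restrict K) ≠ 0 := by
    intro h0
    have : (volume.restrict K) Set.univ = 0 := by rw [h0]; rfl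
    rw [Measure.restrict_apply_univ, hvol] at this
    exact one_ne_zero this
  have hone : eLpNorm (fun _ : Fin n → ℝ => (1 : ℝ)) (ENNReal.ofReal p)
      (volume.restrict K) = 1 := by
    rw [eLpNorm_const _ hpne hμ, Measure.restrict_apply_univ, hvol]
    simp
  have hmono : (1 : ENNReal) ≤ lpErr p K (fun x => (2 : ℝ) - maxMinusMin n x) := by
    rw [← hone]
    refine eLpNorm_mono_ae ?_
    refine (ae_restrict_iff' measurableSet_Icc).2 ?_
    filter_upwards with x hx
    simpa using hptwise x hx
  have : (1 : ENNReal) ≤ ENNReal.ofReal (1/2) := le_trans hmono herr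
  have hlt : ENNReal.ofReal (1/2) < 1 := ENNReal.ofReal_lt_one.2 (by norm_num)
  exact absurd this (not_le.2 hlt)
end SymDyn
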